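/- Let R be a commutative ring, M a finitely generated R-module, and suppose the zero submodule of M has a primary decomposition 0 = N₁ ∩ ⋯ ∩ N_t with each N_i a primary submodule. Fix r ∈ R and an additive subgroup Σ ⊆ R such that M is saturated with respect to every nonzero element of Σ. Then the set {s ∈ Σ : M is not saturated with respect to r − s} has cardinality at most t. -/
import Mathlib


/-- A submodule `N ⊆ M` is primary if every zero divisor on `M/N` is nilpotent on `M/N`. -/
def IsPrimarySubmodule {R M : Type*} [CommRing R] [AddCommGroup M] [Module R M]
    (N : Submodule R M) : Prop :=
  ∀ x : R, (∃ m : M, m ∉ N ∧ x • m ∈ N) → ∃ n : ℕ, ∀ m : M, x ^ n • m ∈ N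

private lemma end_zero_iff {R M : Type*} [CommRing R] [AddCommGroup M] [Module R M]
    (N : Submodule R M) (c : R) :
    algebraMap R (Module.End R (M ⧸ N)) c = 0 ↔ ∀ m : M, c • m ∈ N := by
  constructor
  · intro h m
    have : (c : R) • (Submodule.Quotient.mk m : M ⧸ N) = 0 := by
      have := congrFun (congrArg DFunLike.coe h) (Submodule.Quotient.mk m)
      simpa [Module.algebraMap_end_apply] using this
    rwa [← Submodule.Quotient.mk_smul, Submodule.Quotient.mk_eq_zero] at this
  · intro h
    apply LinearMap.ext
    intro x
    obtain ⟨m, rfl⟩ := Submodule.Quotient.mk_surjective N x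
    simp only [Module.algebraMap_end_apply, ← Submodule.Quotient.mk_smul,
      Submodule.Quotient.mk_eq_zero, LinearMap.zero_apply]
    exact h m

private lemma nil_sub {R M : Type*} [CommRing R] [AddCommGroup M] [Module R M]
    (N : Submodule R M) (a b : R)
    (ha : ∃ n, ∀ m : M, a ^ n • m ∈ N) (hb : ∃ n, ∀ m : M, b ^ n • m ∈ N) :
    ∃ n, ∀ m : M, (a - b) ^ n • m ∈ N := by
  set f := algebraMap R (Module.End R (M ⧸ N)) with hf
  obtain ⟨n, hn⟩ := ha
  obtain ⟨k, hk⟩ := hb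
  have hfa : IsNilpotent (f a) := ⟨n, by rw [← map_pow]; exact (end_zero_iff N _).2 hn⟩
  have hfb : IsNilpotent (f b) := ⟨k, by rw [← map_pow]; exact (end_zero_iff N _).2 hk⟩
  have hcomm : Commute (f a) (f b) := (Commute.all a b).map f
  obtain ⟨m', hm'⟩ := hcomm.isNilpotent_sub hfa hfb
  refine ⟨m', (end_zero_iff N _).1 ?_⟩
  rw [map_pow, map_sub]
  exact hm'

/-- Let `R` be a commutative ring, `M` a finitely generated `R`-module with a minimal
primary decomposition `0 = N₁ ∩ ⋯ ∩ N_t`.  Fix `r ∈ R` and an additive subgroup `Σ ⊆ R`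
such that `M` is saturated with respect to every nonzero element of `Σ`.  Then the set of
`s ∈ Σ` such that `M` is not saturated with respect to `r - s` has at most `t` elements. -/
theorem stmt14 (R : Type*) [CommRing R] (M : Type*) [AddCommGroup M] [Module R M]
    [Module.Finite R M]
    (t : ℕ) (N : Fin t → Submodule R M)
    (hdec : (⨅ i, N i) = ⊥)
    (hprimary : ∀ i, IsPrimarySubmodule (N i))
    (hproper : ∀ i, N i ≠ ⊤)
    (hmin : ∀ i, ¬ (⨅ j ∈ ({i}ᶜ : Set (Fin t)), N j) ≤ N i)
    (r : R) (Sg : AddSubgroup R)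
    (hsat : ∀ s ∈ Sg, s ≠ 0 → ∀ x : M, s • x = 0 → x = 0) :
    ∃ F : Finset R, F.card ≤ t ∧
      {s : R | s ∈ Sg ∧ ∃ x : M, x ≠ 0 ∧ (r - s) • x = 0} ⊆ ↑F := by
  classical
  -- powers of saturating elements are injective
  have hsat_pow : ∀ s ∈ Sg, s ≠ 0 → ∀ k : ℕ, ∀ x : M, s ^ k • x = 0 → x = 0 := by
    intro s hs hs0 k
    induction k with
    | zero => intro x hx; simpa using hx
    | succ k ih =>
      intro x hx
      rw [pow_succ, mul_smul] at hx
      exact hsat s hs hs0 _ (ih _ hx)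
  set Q : Fin t → R → Prop := fun i s => ∃ n, ∀ m : M, (r - s) ^ n • m ∈ N i with hQ
  -- uniqueness: at most one element of Sg satisfies Q i
  have huniq : ∀ i, ∀ s₁ ∈ Sg, ∀ s₂ ∈ Sg, Q i s₁ → Q i s₂ → s₁ = s₂ := by
    intro i s₁ hs₁ s₂ hs₂ h₁ h₂
    by_contra hne
    obtain ⟨k, hk⟩ := nil_sub (N i) (r - s₂) (r - s₁) h₂ h₁
    have heq : r - s₂ - (r - s₁) = s₁ - s₂ := by ring
    rw [heq] at hk
    obtain ⟨x, hxmem, hxnot⟩ := SetLike.not_le_iff_exists.1 (hmin i)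
    have hy : (s₁ - s₂) ^ k • x ∈ ⨅ j, N j := by
      rw [Submodule.mem_iInf]
      intro j
      by_cases hji : j = i
      · subst hji; exact hk x
      · have hxj : x ∈ N j := by
          have := (Submodule.mem_iInf _).1 hxmem j
          exact (Submodule.mem_iInf _).1 this hji
        exact Submodule.smul_mem _ _ hxj
    rw [hdec, Submodule.mem_bot] at hy
    have hx0 : x = 0 :=
      hsat_pow (s₁ - s₂) (Sg.sub_mem hs₁ hs₂) (sub_ne_zero.2 hne) k x hy
    exact hxnot (hx0 ▸ (N i).zero_mem)
  set g : Fin t → R := fun i => if h : ∃ s, s ∈ Sg ∧ Q i s then h.choose else 0 with hg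
  refine ⟨Finset.image g Finset.univ, ?_, ?_⟩
  · calc (Finset.image g Finset.univ).card ≤ Finset.univ.card := Finset.card_image_le
      _ = t := by simp
  · rintro s ⟨hsSg, x, hx0, hxs⟩
    -- find i with x ∉ N i
    have hxi : ∃ i, x ∉ N i := by
      by_contra h
      push_neg at h
      have : x ∈ ⨅ i, N i := (Submodule.mem_iInf _).2 h
      rw [hdec, Submodule.mem_bot] at this
      exact hx0 this
    obtain ⟨i, hi⟩ := hxi
    have hQis : Q i s := hprimary i (r - s) ⟨x, hi, by rw [hxs]; exact (N i).zero_mem⟩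
    have hex : ∃ s', s' ∈ Sg ∧ Q i s' := ⟨s, hsSg, hQis⟩
    have hgi : g i = hex.choose := by simp [hg, hex]
    obtain ⟨hgSg, hgQ⟩ := hex.choose_spec
    have : s = g i := by
      rw [hgi]; exact huniq i s hsSg _ hgSg hQis hgQ
    rw [this]
    simp
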